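/- Let φ₁(x₀,x₁) and φ₂(y₀,y₁) be homogeneous polynomials of degree d over ℂ. If the polynomial φ₁(x₀,x₁) − φ₂(y₀,y₁) in four variables is divisible by x₁ − y₁, then φ₁(x₀,x₁) − φ₂(y₀,y₁) is a scalar multiple of x₁^d − y₁^d. -/

import Mathlib

open MvPolynomial

lemma degree_fin2 (m : Fin 2 →₀ ℕ) : m.degree = m 0 + m 1 := by
  rw [Finsupp.degree_apply, Finset.sum_subset (Finset.subset_univ _)]
  · simp [Fin.sum_univ_two]
  · intro i _ hi
    simpa using (Finsupp.notMem_support_iff.mp hi)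

lemma aux_form (d : ℕ) (φ : MvPolynomial (Fin 2) ℂ) (h : φ.IsHomogeneous d)
    (h0 : ∀ m : Fin 2 →₀ ℕ, coeff m φ ≠ 0 → m 0 = 0) :
    φ = C (coeff (Finsupp.single 1 d) φ) * X 1 ^ d := by
  ext m
  rw [coeff_C_mul, coeff_X_pow]
  by_cases hm : Finsupp.single (1 : Fin 2) d = m
  · simp [← hm]
  · have hz : coeff m φ = 0 := by
      by_contra hc
      have hm0 : m 0 = 0 := h0 m hc
      have hdeg : m.degree = d := by
        by_contra hd
        exact hc (h.coeff_eq_zero hd)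
      rw [degree_fin2, hm0, zero_add] at hdeg
      apply hm
      ext i
      fin_cases i <;> simp [hm0, hdeg]
    simp [hz, hm]

/-- If `φ₁(x₀,x₁) - φ₂(y₀,y₁)` (binary forms of degree `d`, viewed in
`ℂ[x₀,x₁,y₀,y₁]` with variables `x₀,x₁,y₀,y₁` indexed by `0,1,2,3`) is divisible by
`x₁ - y₁`, then it is a scalar multiple of `x₁^d - y₁^d`. -/
theorem stmt_0 (d : ℕ) (φ₁ φ₂ : MvPolynomial (Fin 2) ℂ)
    (h₁ : φ₁.IsHomogeneous d) (h₂ : φ₂.IsHomogeneous d)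
    (hdvd : (X 1 - X 3 : MvPolynomial (Fin 4) ℂ) ∣
      rename (![0, 1] : Fin 2 → Fin 4) φ₁ - rename (![2, 3] : Fin 2 → Fin 4) φ₂) :
    ∃ c : ℂ, rename (![0, 1] : Fin 2 → Fin 4) φ₁ - rename (![2, 3] : Fin 2 → Fin 4) φ₂
      = C c * ((X 1 : MvPolynomial (Fin 4) ℂ) ^ d - (X 3) ^ d) := by
  classical
  obtain ⟨q, hq⟩ := hdvd
  -- substitute x₁ ↦ y₁ (i.e. X 1 ↦ X 3)
  set σf : Fin 4 → MvPolynomial (Fin 4) ℂ :=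
    fun i => if i = 1 then X 3 else X i with hσf
  have hkey' : rename (![0, 3] : Fin 2 → Fin 4) φ₁
      = rename (![2, 3] : Fin 2 → Fin 4) φ₂ := by
    have := congrArg (aeval σf) hq
    rw [map_sub, map_mul, map_sub] at this
    have e1 : aeval σf (X 1 : MvPolynomial (Fin 4) ℂ) = X 3 := by simp [hσf]
    have e3 : aeval σf (X 3 : MvPolynomial (Fin 4) ℂ) = X 3 := by simp [hσf]
    rw [aeval_rename, aeval_rename, e1, e3, sub_self, zero_mul, sub_eq_zero] at this
    have r1 : (σf ∘ (![0, 1] : Fin 2 → Fin 4)) = X ∘ (![0, 3] : Fin 2 → Fin 4) := by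
      funext i; fin_cases i <;> simp [hσf]
    have r2 : (σf ∘ (![2, 3] : Fin 2 → Fin 4)) = X ∘ (![2, 3] : Fin 2 → Fin 4) := by
      funext i; fin_cases i <;> simp [hσf]
    rw [r1, r2] at this
    rw [rename_eq_aeval, rename_eq_aeval]
    exact this
  -- φ₁ has no monomials involving x₀
  have hφ₁0 : ∀ m : Fin 2 →₀ ℕ, coeff m φ₁ ≠ 0 → m 0 = 0 := by
    intro m hc
    by_contra hm0
    have hinj : Function.Injective (![0, 3] : Fin 2 → Fin 4) := by
      intro a b hab
      fin_cases a <;> fin_cases b <;> simp_all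
    have hco : coeff (m.mapDomain (![0, 3] : Fin 2 → Fin 4))
        (rename (![2, 3] : Fin 2 → Fin 4) φ₂) ≠ 0 := by
      rw [← hkey', coeff_rename_mapDomain _ hinj]
      exact hc
    obtain ⟨u, hu, -⟩ := coeff_rename_ne_zero _ _ _ hco
    have h0 : (u.mapDomain (![2, 3] : Fin 2 → Fin 4)) ((![0, 3] : Fin 2 → Fin 4) 0)
        = m 0 := by rw [hu, Finsupp.mapDomain_apply hinj]
    have hz : (u.mapDomain (![2, 3] : Fin 2 → Fin 4)) ((![0, 3] : Fin 2 → Fin 4) 0) = 0 := by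
      rw [Finsupp.mapDomain_notin_range]
      rintro ⟨i, hi⟩
      fin_cases i <;> simp_all
    exact hm0 (h0 ▸ hz)
  -- φ₂ has no monomials involving y₀
  have hφ₂0 : ∀ m : Fin 2 →₀ ℕ, coeff m φ₂ ≠ 0 → m 0 = 0 := by
    intro m hc
    by_contra hm0
    have hinj : Function.Injective (![2, 3] : Fin 2 → Fin 4) := by
      intro a b hab
      fin_cases a <;> fin_cases b <;> simp_all
    have hco : coeff (m.mapDomain (![2, 3] : Fin 2 → Fin 4))
        (rename (![0, 3] : Fin 2 → Fin 4) φ₁) ≠ 0 := by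
      rw [hkey', coeff_rename_mapDomain _ hinj]
      exact hc
    obtain ⟨u, hu, -⟩ := coeff_rename_ne_zero _ _ _ hco
    have h0 : (u.mapDomain (![0, 3] : Fin 2 → Fin 4)) ((![2, 3] : Fin 2 → Fin 4) 0)
        = m 0 := by rw [hu, Finsupp.mapDomain_apply hinj]
    have hz : (u.mapDomain (![0, 3] : Fin 2 → Fin 4)) ((![2, 3] : Fin 2 → Fin 4) 0) = 0 := by
      rw [Finsupp.mapDomain_notin_range]
      rintro ⟨i, hi⟩
      fin_cases i <;> simp_all
    exact hm0 (h0 ▸ hz)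
  set c₁ := coeff (Finsupp.single 1 d) φ₁ with hc₁
  set c₂ := coeff (Finsupp.single 1 d) φ₂ with hc₂
  have hform₁ : φ₁ = C c₁ * X 1 ^ d := aux_form d φ₁ h₁ hφ₁0
  have hform₂ : φ₂ = C c₂ * X 1 ^ d := aux_form d φ₂ h₂ hφ₂0
  -- c₁ = c₂
  have hcc : c₁ = c₂ := by
    have := hkey'
    rw [hform₁, hform₂, map_mul, map_mul, map_pow, map_pow, rename_C, rename_C,
      rename_X, rename_X] at this
    simp only [Matrix.cons_val_one, Matrix.head_cons] at this
    have h3 := congrArg (coeff (Finsupp.single 3 d)) this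
    simpa [coeff_C_mul, coeff_X_pow] using h3
  refine ⟨c₁, ?_⟩
  rw [hform₁, hform₂, ← hcc, map_mul, map_mul, map_pow, map_pow, rename_C, rename_C,
    rename_X, rename_X]
  simp only [Matrix.cons_val_one, Matrix.head_cons, Matrix.cons_val_zero]
  ring
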